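/- arXiv:1508.06333 — 2 statements merged into one kernel-verified Lean document; each statement's English description precedes it below -/
import Mathlib

section
/- The function f(α) = (1/2 − 2α)·tan(α/2) on the interval [0, 1/4] attains a maximum value strictly greater than 0.0156. -/
/-- The function `f(α) = (1/2 − 2α)·tan(α/2)` attains on `[0, 1/4]` a maximum value
strictly greater than `0.0156`. -/
theorem stmt6 : ∃ α ∈ Set.Icc (0 : ℝ) (1 / 4),
    (∀ β ∈ Set.Icc (0 : ℝ) (1 / 4),
        (1 / 2 - 2 * β) * Real.tan (β / 2) ≤ (1 / 2 - 2 * α) * Real.tan (α / 2)) ∧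
      (0.0156 : ℝ) < (1 / 2 - 2 * α) * Real.tan (α / 2) := by
  have hcont : ContinuousOn (fun β : ℝ => (1 / 2 - 2 * β) * Real.tan (β / 2))
      (Set.Icc (0 : ℝ) (1 / 4)) := by
    apply ContinuousOn.mul (by fun_prop)
    intro β hβ
    apply ContinuousAt.continuousWithinAt
    have hcos : Real.cos (β / 2) ≠ 0 := by
      have hpi : (3.141592 : ℝ) < Real.pi := by
        have := Real.pi_gt_d6
        linarith
      have := hβ.1; have := hβ.2
      have : 0 < Real.cos (β / 2) := by
        apply Real.cos_pos_of_mem_Ioo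
        constructor <;> [linarith; (simp only [Set.mem_Icc] at hβ; linarith)]
      linarith
    have h2 : ContinuousAt (fun x : ℝ => x / 2) β := by fun_prop
    show ContinuousAt (Real.tan ∘ fun x : ℝ => x / 2) β
    exact ContinuousAt.comp (x := β) (f := fun x : ℝ => x / 2) (Real.continuousAt_tan.2 hcos) h2
  obtain ⟨α, hα, hmax⟩ := (isCompact_Icc).exists_isMaxOn ⟨0, by norm_num⟩ hcont
  refine ⟨α, hα, fun β hβ => hmax hβ, ?_⟩
  have h8 : (1/8 : ℝ) ∈ Set.Icc (0:ℝ) (1/4) := by norm_num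
  have hle := hmax h8
  have htan : (1/16 : ℝ) < Real.tan ((1/8 : ℝ) / 2) := by
    have h := Real.lt_tan (x := 1/16) (by norm_num) (by
      have := Real.pi_gt_d6; linarith)
    norm_num at h ⊢
    exact h
  calc (0.0156 : ℝ) < (1/2 - 2*(1/8 : ℝ)) * (1/16) := by norm_num
    _ < (1/2 - 2*(1/8 : ℝ)) * Real.tan ((1/8:ℝ)/2) := by nlinarith
    _ ≤ _ := hle
end

section
/- There exists k ∈ (0.05, 0.06) and α ∈ (0, π/2) such that (1 − k − 2α)·tan(α/2) = k and α maximizes α' ↦ (1 − k − 2α')·tan(α'/2) over [0, (1−k)/2]. In particular, with k = 0.056 and α = 0.2371, one has |(1 − k − 2α)·tan(α/2) − k| < 0.001. -/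
open Real Set

/-- zig-zag progress function -/
noncomputable def zzg (k a : ℝ) : ℝ := (1 - k - 2 * a) * Real.tan (a / 2)

/-- sup of zig-zag progress over `[0, 1/2]` -/
noncomputable def zzF (k : ℝ) : ℝ := sSup (zzg k '' Set.Icc 0 (1 / 2))

lemma tan_nn {x : ℝ} (h0 : 0 ≤ x) (h1 : x ≤ 1 / 4) : 0 ≤ Real.tan x := by
  have := Real.pi_gt_three
  exact Real.tan_nonneg_of_nonneg_of_le_pi_div_two h0 (by linarith)

lemma tan_lb {x : ℝ} (h0 : 0 ≤ x) (h1 : x ≤ 1 / 4) : x ≤ Real.tan x := by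
  have := Real.pi_gt_three
  exact Real.le_tan h0 (by linarith)

lemma cos_lb {x : ℝ} (_h0 : 0 ≤ x) (_h1 : x ≤ 1 / 4) : 1 - x ^ 2 / 2 ≤ Real.cos x :=
  Real.one_sub_sq_div_two_le_cos

lemma tan_ub {x : ℝ} (h0 : 0 ≤ x) (h1 : x ≤ 1 / 4) :
    Real.tan x * (1 - x ^ 2 / 2) ≤ x := by
  have hc := cos_lb h0 h1
  have ht := tan_nn h0 h1
  have hcne : Real.cos x ≠ 0 := by nlinarith
  calc Real.tan x * (1 - x ^ 2 / 2) ≤ Real.tan x * Real.cos x :=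
        mul_le_mul_of_nonneg_left hc ht
    _ = Real.sin x := Real.tan_mul_cos hcne
    _ ≤ x := Real.sin_le h0

lemma tan_ub' {x : ℝ} (h0 : 0 ≤ x) (h1 : x ≤ 1 / 4) : Real.tan x ≤ 32 / 31 * x := by
  have h := tan_ub h0 h1
  have ht := tan_nn h0 h1
  nlinarith [mul_nonneg ht (by nlinarith : (0:ℝ) ≤ 1/16 - x^2)]

lemma zzg_contOn (k : ℝ) : ContinuousOn (zzg k) (Set.Icc (0 : ℝ) (1 / 2)) := by
  apply ContinuousOn.mul (by fun_prop)
  intro a ha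
  apply ContinuousAt.continuousWithinAt
  have h2 : a / 2 ≤ 1 / 4 := by linarith [ha.2]
  have h0 : 0 ≤ a / 2 := by linarith [ha.1]
  have hcne : Real.cos (a / 2) ≠ 0 := by nlinarith [cos_lb h0 h2]
  have hdiv : ContinuousAt (fun y : ℝ => y / 2) a := (continuous_id.div_const 2).continuousAt
  exact ContinuousAt.comp (f := fun y : ℝ => y / 2) (Real.continuousAt_tan.mpr hcne) hdiv

lemma zzS_nonempty (k : ℝ) : (zzg k '' Set.Icc 0 (1 / 2)).Nonempty :=
  (Set.nonempty_Icc.mpr (by norm_num)).image _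

lemma zzS_bdd (k : ℝ) : BddAbove (zzg k '' Set.Icc 0 (1 / 2)) :=
  (isCompact_Icc.image_of_continuousOn (zzg_contOn k)).bddAbove

lemma zzF_lip : LipschitzWith 1 zzF := by
  have key : ∀ k1 k2 : ℝ, zzF k1 ≤ zzF k2 + |k1 - k2| := by
    intro k1 k2
    apply csSup_le (zzS_nonempty k1)
    rintro y ⟨a, ha, rfl⟩
    have h2 : a / 2 ≤ 1 / 4 := by linarith [ha.2]
    have h0 : 0 ≤ a / 2 := by linarith [ha.1]
    have ht1 := tan_nn h0 h2
    have ht2 := tan_ub' h0 h2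
    have hle : zzg k2 a ≤ zzF k2 := le_csSup (zzS_bdd k2) (Set.mem_image_of_mem _ ha)
    have habs : zzg k1 a ≤ zzg k2 a + |k1 - k2| := by
      have : zzg k1 a - zzg k2 a = (k2 - k1) * Real.tan (a / 2) := by
        unfold zzg; ring
      have h3 : (k2 - k1) * Real.tan (a / 2) ≤ |k1 - k2| := by
        rcases abs_cases (k1 - k2) with ⟨he, _⟩ | ⟨he, _⟩ <;> nlinarith [abs_nonneg (k1 - k2)]
      linarith
    linarith
  apply LipschitzWith.of_dist_le_mul
  intro k1 k2
  rw [Real.dist_eq, Real.dist_eq]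
  have h1 := key k1 k2
  have h2 := key k2 k1
  rw [abs_sub_comm k2 k1] at h2
  rw [abs_le]
  simp only [NNReal.coe_one, one_mul]
  constructor <;> linarith

lemma zzF_attains (k : ℝ) : ∃ α ∈ Set.Icc (0 : ℝ) (1 / 2), zzg k α = zzF k ∧
    ∀ a ∈ Set.Icc (0 : ℝ) (1 / 2), zzg k a ≤ zzg k α := by
  obtain ⟨α, hα, hmax⟩ := isCompact_Icc.exists_isMaxOn (Set.nonempty_Icc.mpr (by norm_num))
    (zzg_contOn k)
  refine ⟨α, hα, ?_, fun a ha => hmax ha⟩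
  apply le_antisymm
  · exact le_csSup (zzS_bdd k) (Set.mem_image_of_mem _ hα)
  · exact csSup_le (zzS_nonempty k) (by rintro y ⟨a, ha, rfl⟩; exact hmax ha)

lemma zzF_low : 0.05 < zzF 0.05 := by
  have hmem : (0.2371 : ℝ) ∈ Set.Icc (0 : ℝ) (1 / 2) := by norm_num
  have hle : zzg 0.05 0.2371 ≤ zzF 0.05 := le_csSup (zzS_bdd _) (Set.mem_image_of_mem _ hmem)
  have ht := tan_lb (x := 0.2371 / 2) (by norm_num) (by norm_num)
  have : (0.05 : ℝ) < zzg 0.05 0.2371 := by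
    unfold zzg; nlinarith
  linarith

lemma zzF_high : zzF 0.06 < 0.06 := by
  have h : zzF 0.06 ≤ 0.059 := by
    apply csSup_le (zzS_nonempty _)
    rintro y ⟨a, ha, rfl⟩
    have h2 : a / 2 ≤ 1 / 4 := by linarith [ha.2]
    have h0 : 0 ≤ a / 2 := by linarith [ha.1]
    have ht1 := tan_nn h0 h2
    have ht2 := tan_ub' h0 h2
    unfold zzg
    rcases le_or_gt (1 - 0.06 - 2 * a) 0 with hc | hc
    · nlinarith
    · nlinarith [sq_nonneg (a - 0.235)]
  linarith

/-- There is a threshold `k ∈ (0.05, 0.06)` and an angle `α ∈ (0, π/2)` such that the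
maximal zig-zag vertical progress `(1 − k − 2α)·tan(α/2)` equals `k`, with `α` maximizing
`α' ↦ (1 − k − 2α')·tan(α'/2)` over `[0, (1−k)/2]`.  In particular with `k = 0.056` and
`α = 0.2371` the fixed-point equation holds to within `0.001`. -/
theorem stmt11 :
    (∃ k ∈ Set.Ioo (0.05 : ℝ) 0.06, ∃ α ∈ Set.Ioo (0 : ℝ) (Real.pi / 2),
      (1 - k - 2 * α) * Real.tan (α / 2) = k ∧
      ∀ α' ∈ Set.Icc (0 : ℝ) ((1 - k) / 2),
        (1 - k - 2 * α') * Real.tan (α' / 2) ≤ (1 - k - 2 * α) * Real.tan (α / 2)) ∧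
    |(1 - 0.056 - 2 * 0.2371) * Real.tan (0.2371 / 2) - 0.056| < (0.001 : ℝ) := by
  have hpi := Real.pi_gt_three
  constructor
  · -- find fixed point k with IVT
    have hcont : ContinuousOn (fun k => zzF k - k) (Set.Icc (0.05 : ℝ) 0.06) :=
      (zzF_lip.continuous.sub continuous_id).continuousOn
    have hivt := intermediate_value_Ioo' (by norm_num : (0.05 : ℝ) ≤ 0.06) hcont
    have h0mem : (0 : ℝ) ∈ Set.Ioo (zzF 0.06 - 0.06) (zzF 0.05 - 0.05) := by
      constructor
      · linarith [zzF_high]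
      · linarith [zzF_low]
    obtain ⟨k, hk, hfk⟩ := hivt h0mem
    have hFk : zzF k = k := by linarith [sub_eq_zero.mp hfk]
    obtain ⟨α, hα, hval, hmax⟩ := zzF_attains k
    have hgk : zzg k α = k := by rw [hval, hFk]
    have hk1 : (0.05 : ℝ) < k := hk.1
    have hk2 : k < 0.06 := hk.2
    -- facts about α
    have h2 : α / 2 ≤ 1 / 4 := by linarith [hα.2]
    have h0 : 0 ≤ α / 2 := by linarith [hα.1]
    have ht1 := tan_nn h0 h2
    have ht2 := tan_ub' h0 h2
    have hgpos : 0 < zzg k α := by rw [hgk]; linarith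
    have hαpos : 0 < α := by
      rcases eq_or_lt_of_le hα.1 with h | h
      · exfalso
        rw [← h] at hgpos
        norm_num [zzg] at hgpos
      · exact h
    refine ⟨k, hk, α, ⟨hαpos, by linarith [hα.2]⟩, hgk, ?_⟩
    intro α' hα'
    have hsub : α' ∈ Set.Icc (0 : ℝ) (1 / 2) := ⟨hα'.1, by linarith [hα'.2]⟩
    exact hmax α' hsub
  · -- numeric verification
    have ht1 := tan_lb (x := 0.2371 / 2) (by norm_num) (by norm_num)
    have ht2 := tan_ub (x := 0.2371 / 2) (by norm_num) (by norm_num)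
    rw [abs_lt]
    constructor <;> nlinarith
end
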